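/- For every finite simple graph G with at least one edge, b(G) ≤ bg(G) ≤ 2·b(G) − 1 and b(G) ≤ b̂g(G) ≤ 2·b(G). -/

import Mathlib

open Classical

namespace BrushGame

variable {V : Type*}

/-- The number of neighbours of `x` in `G` that belong to the list `l`. -/
noncomputable def nbr [Fintype V] (G : SimpleGraph V) (x : V) (l : List V) : ℕ :=
  (Finset.univ.filter (fun u => G.Adj x u ∧ u ∈ l)).card

/-- The degree of `x` in `G`. -/
noncomputable def deg [Fintype V] (G : SimpleGraph V) (x : V) : ℕ :=
  (Finset.univ.filter (fun u => G.Adj x u)).card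

/-- `l` is a valid sequence of vertex firings starting from the brush assignment `c`:
the vertices of `l` fire in order; when a vertex fires, the number of brushes on it
(those from `c` plus one from each previously fired neighbour) is at least its number of
still-dirty neighbours. -/
def FiringSeq [Fintype V] (G : SimpleGraph V) (c : V → ℕ) (l : List V) : Prop :=
  l.Nodup ∧ ∀ i : Fin l.length,
    deg G (l.get i) ≤ c (l.get i) + 2 * nbr G (l.get i) (l.take i.1)

/-- Vertex `v` gets cleaned, starting from the assignment `c` of brushes. -/
def Cleaned [Fintype V] (G : SimpleGraph V) (c : V → ℕ) (v : V) : Prop :=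
  ∃ l, FiringSeq G c l ∧ v ∈ l

/-- All vertices are clean, i.e. the game is over. -/
def Over [Fintype V] (G : SimpleGraph V) (c : V → ℕ) : Prop := ∀ v, Cleaned G c v

/-- An upper bound on the number of turns of any brushing game on `G` (plus one). -/
noncomputable def fuel [Fintype V] (G : SimpleGraph V) : ℕ := (∑ v, deg G v) + 1

/-- The value (number of brushes placed from now on, under optimal play) of the brushing
game on `G` from the brush assignment `c`, with `n` turns of fuel remaining;
`mover = true` means that it is Min's turn to place a brush (on a dirty vertex),
`mover = false` that it is Max's turn.  The fuel never runs out along legal play when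
the game is started with fuel `fuel G`. -/
noncomputable def val [Fintype V] (G : SimpleGraph V) : Bool → ℕ → (V → ℕ) → ℕ
  | _, 0, _ => 0
  | mover, n + 1, c =>
    if Over G c then 0
    else if mover then
      1 + sInf {k | ∃ v, ¬ Cleaned G c v ∧ k = val G false n (Function.update c v (c v + 1))}
    else
      1 + sSup {k | ∃ v, ¬ Cleaned G c v ∧ k = val G true n (Function.update c v (c v + 1))}

/-- The game brush number of `G` starting from the initial configuration `f`, Min to move. -/
noncomputable def bgFrom [Fintype V] (G : SimpleGraph V) (f : V → ℕ) : ℕ :=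
  val G true (fuel G) f

/-- The game brush number of `G` starting from the initial configuration `f`, Max to move. -/
noncomputable def bghatFrom [Fintype V] (G : SimpleGraph V) (f : V → ℕ) : ℕ :=
  val G false (fuel G) f

/-- The (Min-start) game brush number of `G`. -/
noncomputable def bg [Fintype V] (G : SimpleGraph V) : ℕ := bgFrom G (fun _ => 0)

/-- The Max-start game brush number of `G`. -/
noncomputable def bghat [Fintype V] (G : SimpleGraph V) : ℕ := bghatFrom G (fun _ => 0)

/-- `G` can be cleaned by the configuration `f`. -/
def CleansBy [Fintype V] (G : SimpleGraph V) (f : V → ℕ) : Prop :=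
  ∃ l, FiringSeq G f l ∧ ∀ v : V, v ∈ l

/-- The brush number of `G`. -/
noncomputable def bNum [Fintype V] (G : SimpleGraph V) : ℕ :=
  sInf {k | ∃ f, CleansBy G f ∧ k = ∑ v, f v}

section AuxLemmas

variable [Fintype V] {G : SimpleGraph V} {c c' f : V → ℕ} {l m : List V} {v x : V}
  {n : ℕ} {mover : Bool}

lemma nbr_mono (G : SimpleGraph V) (x : V) {l l' : List V} (h : ∀ u ∈ l, u ∈ l') :
    nbr G x l ≤ nbr G x l' := by
  apply Finset.card_le_card
  intro u hu
  simp only [Finset.mem_filter, Finset.mem_univ, true_and] at hu ⊢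
  exact ⟨hu.1, h _ hu.2⟩

lemma cleaned_of_mem (hl : FiringSeq G c l) (hv : v ∈ l) : Cleaned G c v := ⟨l, hl, hv⟩

lemma firingSeq_mono (hcc : ∀ w, c w ≤ c' w) (hl : FiringSeq G c l) : FiringSeq G c' l :=
  ⟨hl.1, fun i => le_trans (hl.2 i) (by have := hcc (l.get i); omega)⟩

lemma le_update (c : V → ℕ) (u : V) : ∀ w, c w ≤ Function.update c u (c u + 1) w := by
  intro w; rcases eq_or_ne w u with rfl | hw
  · simp
  · rw [Function.update_of_ne hw]

lemma cleaned_single (h : deg G v ≤ c v) : Cleaned G c v := by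
  refine ⟨[v], ⟨List.nodup_singleton v, ?_⟩, List.mem_singleton_self v⟩
  intro i
  obtain ⟨i, hi⟩ := i
  simp only [List.length_singleton] at hi
  interval_cases i
  simpa [nbr] using h

lemma lt_deg_of_not_cleaned (h : ¬ Cleaned G c v) : c v < deg G v := by
  by_contra hc
  exact h (cleaned_single (by omega))

lemma exists_first {α : Type*} (P : α → Prop) :
    ∀ (m : List α), (∃ x ∈ m, ¬ P x) →
      ∃ k : Fin m.length, ¬ P (m.get k) ∧ ∀ y ∈ m.take k.1, P y := by
  intro m
  induction m with
  | nil => rintro ⟨x, hx, -⟩; cases hx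
  | cons a t ih =>
    rintro ⟨x, hx, hPx⟩
    by_cases hPa : P a
    · have hxt : x ∈ t := by
        rcases List.mem_cons.mp hx with rfl | h
        · exact absurd hPa hPx
        · exact h
      obtain ⟨k, hk1, hk2⟩ := ih ⟨x, hxt, hPx⟩
      refine ⟨⟨k.1 + 1, by simpa using k.2⟩, by simpa using hk1, ?_⟩
      intro y hy
      rw [List.take_succ_cons] at hy
      rcases List.mem_cons.mp hy with rfl | hy
      · exact hPa
      · exact hk2 y hy
    · exact ⟨⟨0, by simp⟩, by simpa using hPa, by simp⟩

lemma firingSeq_nil : FiringSeq G c ([] : List V) :=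
  ⟨List.nodup_nil, fun i => i.elim0⟩

lemma firingSeq_snoc (hl : FiringSeq G c l) (hx : x ∉ l)
    (hd : deg G x ≤ c x + 2 * nbr G x l) : FiringSeq G c (l ++ [x]) := by
  constructor
  · rw [List.nodup_append]
    refine ⟨hl.1, List.nodup_singleton x, ?_⟩
    intro a ha b hb hab
    rw [List.mem_singleton] at hb
    subst hb; subst hab; exact hx ha
  · intro i
    have hlen : (l ++ [x]).length = l.length + 1 := by simp
    rcases lt_or_ge i.1 l.length with h | h
    · have hget : (l ++ [x]).get i = l.get ⟨i.1, h⟩ := by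
        simp [List.get_eq_getElem, List.getElem_append_left h]
      have htake : (l ++ [x]).take i.1 = l.take i.1 := by
        rw [List.take_append]
        simp [Nat.sub_eq_zero_of_le h.le]
      rw [hget, htake]
      exact hl.2 ⟨i.1, h⟩
    · have hieq : i.1 = l.length := by have := i.2; omega
      have hget : (l ++ [x]).get i = x := by
        simp [List.get_eq_getElem, List.getElem_append_right (le_of_eq hieq.symm), hieq]
      have htake : (l ++ [x]).take i.1 = l := by
        rw [List.take_append]
        simp [hieq]
      rw [hget, htake]
      exact hd

lemma firingSeq_merge (hm : FiringSeq G c m) :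
    ∀ (n : ℕ) (l : List V), FiringSeq G c l →
      (Finset.univ.filter (fun y => y ∈ m ∧ y ∉ l)).card ≤ n →
      ∃ l', FiringSeq G c l' ∧ (∀ y ∈ l, y ∈ l') ∧ ∀ y ∈ m, y ∈ l' := by
  intro n
  induction n with
  | zero =>
    intro l hl hcard
    refine ⟨l, hl, fun y hy => hy, fun y hy => ?_⟩
    by_contra hyl
    have hmem : y ∈ Finset.univ.filter (fun y => y ∈ m ∧ y ∉ l) := by simp [hy, hyl]
    have := Finset.card_pos.mpr ⟨y, hmem⟩
    omega
  | succ n ih =>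
    intro l hl hcard
    by_cases hall : ∀ y ∈ m, y ∈ l
    · exact ⟨l, hl, fun y hy => hy, hall⟩
    · push_neg at hall
      obtain ⟨k, hk1, hk2⟩ := exists_first (fun y => y ∈ l) m hall
      have hxm : m.get k ∈ m := List.get_mem _ _
      have hcond := hm.2 k
      have hle : nbr G (m.get k) (m.take k.1) ≤ nbr G (m.get k) l := nbr_mono _ _ hk2
      have hsnoc := firingSeq_snoc hl hk1 (by omega)
      have hnew : (Finset.univ.filter (fun y => y ∈ m ∧ y ∉ l ++ [m.get k])).card ≤ n := by
        have hsub : Finset.univ.filter (fun y => y ∈ m ∧ y ∉ l ++ [m.get k]) ⊆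
            Finset.univ.filter (fun y => y ∈ m ∧ y ∉ l) := by
          intro y hy
          simp only [Finset.mem_filter, Finset.mem_univ, true_and, List.mem_append,
            List.mem_singleton] at hy ⊢
          exact ⟨hy.1, fun h => hy.2 (Or.inl h)⟩
        have hss : Finset.univ.filter (fun y => y ∈ m ∧ y ∉ l ++ [m.get k]) ⊂
            Finset.univ.filter (fun y => y ∈ m ∧ y ∉ l) := by
          rw [Finset.ssubset_iff_of_subset hsub]
          refine ⟨m.get k, ?_, by simp⟩
          simp only [Finset.mem_filter, Finset.mem_univ, true_and]
          exact ⟨hxm, hk1⟩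
        have := Finset.card_lt_card hss
        omega
      obtain ⟨l', h1, h2, h3⟩ := ih (l ++ [m.get k]) hsnoc hnew
      exact ⟨l', h1, fun y hy => h2 y (by simp [hy]), h3⟩

lemma exists_firingSeq_forall :
    ∀ (s : List V), (∀ v ∈ s, Cleaned G c v) →
      ∃ l, FiringSeq G c l ∧ ∀ v ∈ s, v ∈ l := by
  intro s
  induction s with
  | nil => exact fun _ => ⟨[], firingSeq_nil, by simp⟩
  | cons a t ih =>
    intro h
    obtain ⟨l₁, hl₁, hmem₁⟩ := ih (fun v hv => h v (by simp [hv]))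
    obtain ⟨ma, hma, hamem⟩ := h a (by simp)
    obtain ⟨l', h1, h2, h3⟩ := firingSeq_merge hma _ l₁ hl₁ le_rfl
    refine ⟨l', h1, fun v hv => ?_⟩
    rcases List.mem_cons.mp hv with rfl | hv
    · exact h3 _ hamem
    · exact h2 _ (hmem₁ _ hv)

lemma over_cleansBy (h : Over G c) : CleansBy G c := by
  obtain ⟨l, hl, hmem⟩ := exists_firingSeq_forall Finset.univ.toList (fun v _ => h v)
  exact ⟨l, hl, fun v => hmem v (by simp)⟩

lemma over_of_dominates (hf : CleansBy G f) (h : ∀ v, ¬ Cleaned G c v → f v ≤ c v) :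
    Over G c := by
  obtain ⟨l, hl, hall⟩ := hf
  obtain ⟨M, hM, hMall⟩ := exists_firingSeq_forall
    ((Finset.univ.filter (fun v => Cleaned G c v)).toList)
    (fun v hv => by simpa using (Finset.mem_filter.mp (Finset.mem_toList.mp hv)).2)
  by_contra hov
  rw [Over] at hov
  push_neg at hov
  obtain ⟨v0, hv0⟩ := hov
  obtain ⟨k, hk, hpre⟩ := exists_first (fun y => Cleaned G c y) l ⟨v0, hall v0, hv0⟩
  have hxM : l.get k ∉ M := fun hx => hk (cleaned_of_mem hM hx)
  have hcond := hl.2 k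
  have h1 : nbr G (l.get k) (l.take k.1) ≤ nbr G (l.get k) M := by
    refine nbr_mono _ _ (fun u hu => hMall u ?_)
    simp [hpre u hu]
  have hfx : f (l.get k) ≤ c (l.get k) := h (l.get k) hk
  have hdx : deg G (l.get k) ≤ c (l.get k) + 2 * nbr G (l.get k) M := by omega
  exact hk (cleaned_of_mem (firingSeq_snoc hM hxM hdx) (by simp))

lemma exists_dirty_lt (hf : CleansBy G f) (h : ¬ Over G c) :
    ∃ v, ¬ Cleaned G c v ∧ c v < f v := by
  by_contra hc
  push_neg at hc
  exact h (over_of_dominates hf fun v hv => hc v hv)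

lemma val_zero : val G mover 0 c = 0 := rfl

lemma val_succ_over (h : Over G c) : val G mover (n+1) c = 0 := by
  rw [val, if_pos h]

lemma val_succ_min (h : ¬ Over G c) : val G true (n+1) c =
    1 + sInf {k | ∃ v, ¬ Cleaned G c v ∧ k = val G false n (Function.update c v (c v + 1))} := by
  rw [val, if_neg h, if_pos rfl]

lemma val_succ_max (h : ¬ Over G c) : val G false (n+1) c =
    1 + sSup {k | ∃ v, ¬ Cleaned G c v ∧ k = val G true n (Function.update c v (c v + 1))} := by
  rw [val, if_neg h]; simp

lemma setS_eq (c F : V → ℕ) :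
    {k | ∃ v, ¬ Cleaned G c v ∧ k = F v} = F '' {v | ¬ Cleaned G c v} := by
  ext k
  constructor
  · rintro ⟨v, hv, rfl⟩; exact ⟨v, hv, rfl⟩
  · rintro ⟨v, hv, rfl⟩; exact ⟨v, hv, rfl⟩

lemma val_succ_eq_max (h : ¬ Over G c) (n : ℕ) : ∃ v, ¬ Cleaned G c v ∧
    val G false (n+1) c = 1 + val G true n (Function.update c v (c v + 1)) := by
  rw [Over] at h
  push_neg at h
  obtain ⟨v0, hv0⟩ := h
  have hov : ¬ Over G c := fun ho => hv0 (ho v0)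
  rw [val_succ_max hov]
  set S := {k | ∃ v, ¬ Cleaned G c v ∧ k = val G true n (Function.update c v (c v + 1))} with hS
  have hfin : S.Finite := by rw [hS, setS_eq]; exact (Set.toFinite _).image _
  have hne : S.Nonempty := ⟨_, v0, hv0, rfl⟩
  obtain ⟨v, hv, hveq⟩ := hne.csSup_mem hfin
  exact ⟨v, hv, by rw [hveq]⟩

lemma val_succ_eq_min (h : ¬ Over G c) (n : ℕ) : ∃ v, ¬ Cleaned G c v ∧
    val G true (n+1) c = 1 + val G false n (Function.update c v (c v + 1)) := by
  rw [Over] at h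
  push_neg at h
  obtain ⟨v0, hv0⟩ := h
  have hov : ¬ Over G c := fun ho => hv0 (ho v0)
  rw [val_succ_min hov]
  have hne : {k | ∃ v, ¬ Cleaned G c v ∧
      k = val G false n (Function.update c v (c v + 1))}.Nonempty := ⟨_, v0, hv0, rfl⟩
  obtain ⟨v, hv, hveq⟩ := Nat.sInf_mem hne
  exact ⟨v, hv, by rw [hveq]⟩

lemma sum_update_sub (g c : V → ℕ) (v : V) (h : c v < g v) :
    ∑ w, (g w - Function.update c v (c v + 1) w) + 1 = ∑ w, (g w - c w) := by
  rw [← Finset.add_sum_erase Finset.univ (fun w => g w - Function.update c v (c v + 1) w)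
      (Finset.mem_univ v),
    ← Finset.add_sum_erase Finset.univ (fun w => g w - c w) (Finset.mem_univ v)]
  have he : ∑ w ∈ Finset.univ.erase v, (g w - Function.update c v (c v + 1) w)
      = ∑ w ∈ Finset.univ.erase v, (g w - c w) :=
    Finset.sum_congr rfl (fun w hw => by rw [Function.update_of_ne (Finset.ne_of_mem_erase hw)])
  rw [he, Function.update_self]
  omega

lemma sum_update_add (c : V → ℕ) (v : V) :
    ∑ w, Function.update c v (c v + 1) w = (∑ w, c w) + 1 := by
  rw [Finset.sum_update_of_mem (Finset.mem_univ v),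
    ← Finset.add_sum_erase Finset.univ c (Finset.mem_univ v), Finset.erase_eq]
  omega

lemma sum_sub_update_le (g c : V → ℕ) (v : V) :
    ∑ w, (g w - Function.update c v (c v + 1) w) ≤ ∑ w, (g w - c w) := by
  refine Finset.sum_le_sum fun w _ => ?_
  have := le_update c v w
  omega

lemma bNum_le_val : ∀ (n : ℕ) (c : V → ℕ) (mover : Bool),
    (∑ w, (deg G w - c w)) < n → bNum G ≤ (∑ w, c w) + val G mover n c := by
  intro n
  induction n with
  | zero => intro c mover h; omega
  | succ n ih =>
    intro c mover h
    by_cases hov : Over G c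
    · rw [val_succ_over hov]
      simpa [bNum] using Nat.sInf_le
        (show (∑ w, c w) ∈ {k | ∃ f, CleansBy G f ∧ k = ∑ w, f w} from ⟨c, over_cleansBy hov, rfl⟩)
    · obtain ⟨v, hv, heq⟩ : ∃ v, ¬ Cleaned G c v ∧
          val G mover (n+1) c = 1 + val G (!mover) n (Function.update c v (c v + 1)) := by
        cases mover
        · exact val_succ_eq_max hov n
        · exact val_succ_eq_min hov n
      have hlt : c v < deg G v := lt_deg_of_not_cleaned hv
      have hmeas := sum_update_sub (deg G) c v hlt
      have hih := ih (Function.update c v (c v + 1)) (!mover) (by omega)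
      rw [sum_update_add] at hih
      omega

lemma val_le_phi (hf : CleansBy G f) : ∀ (n : ℕ) (c : V → ℕ),
    val G true n c ≤ 2 * (∑ w, (f w - c w)) - 1 ∧
    val G false n c ≤ 2 * (∑ w, (f w - c w)) := by
  intro n
  induction n with
  | zero => intro c; simp [val_zero]
  | succ n ih =>
    intro c
    by_cases hov : Over G c
    · simp [val_succ_over hov]
    · obtain ⟨v, hv, hvlt⟩ := exists_dirty_lt hf hov
      have hphi1 : 1 ≤ ∑ w, (f w - c w) := by
        have h1 : 1 ≤ f v - c v := by omega
        exact le_trans h1 (Finset.single_le_sum (f := fun w => f w - c w)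
          (fun w _ => Nat.zero_le _) (Finset.mem_univ v))
      constructor
      · rw [val_succ_min hov]
        have hmem : val G false n (Function.update c v (c v + 1)) ∈
            {k | ∃ v, ¬ Cleaned G c v ∧ k = val G false n (Function.update c v (c v + 1))} :=
          ⟨v, hv, rfl⟩
        have h1 := Nat.sInf_le hmem
        have h2 := (ih (Function.update c v (c v + 1))).2
        have h3 := sum_update_sub f c v hvlt
        omega
      · obtain ⟨v', hv', heq⟩ := val_succ_eq_max hov n
        have h2 := (ih (Function.update c v' (c v' + 1))).1
        have h3 := sum_sub_update_le f c v'
        omega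

lemma cleansBy_deg : CleansBy G (deg G) :=
  ⟨Finset.univ.toList, ⟨Finset.nodup_toList _, fun _ => Nat.le_add_right _ _⟩, fun v => by simp⟩

lemma bNum_rep : ∃ f, CleansBy G f ∧ bNum G = ∑ w, f w := by
  have hne : {k | ∃ f, CleansBy G f ∧ k = ∑ w, f w}.Nonempty := ⟨_, deg G, cleansBy_deg, rfl⟩
  exact Nat.sInf_mem hne

lemma one_le_sum_of_cleansBy (hedge : ∃ u v : V, G.Adj u v) (hf : CleansBy G f) :
    1 ≤ ∑ w, f w := by
  by_contra hs
  push_neg at hs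
  have hf0 : ∀ w, f w = 0 := fun w =>
    Finset.sum_eq_zero_iff.mp (by omega : ∑ w, f w = 0) w (Finset.mem_univ w)
  obtain ⟨u, v, huv⟩ := hedge
  obtain ⟨l, hl, hall⟩ := hf
  have hdu : ¬ (deg G u = 0) := by
    rw [deg, Finset.card_eq_zero]
    intro hemp
    have : v ∈ Finset.univ.filter (fun w => G.Adj u w) := by simp [huv]
    rw [hemp] at this
    simp at this
  obtain ⟨k, hk1, hk2⟩ := exists_first (fun y => deg G y = 0) l ⟨u, hall u, hdu⟩
  have hcond := hl.2 k
  have hnbr : nbr G (l.get k) (l.take k.1) = 0 := by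
    rw [nbr, Finset.card_eq_zero]
    rw [Finset.eq_empty_iff_forall_notMem]
    intro w hw
    simp only [Finset.mem_filter, Finset.mem_univ, true_and] at hw
    obtain ⟨hadj, hmem⟩ := hw
    have h0 : deg G w = 0 := hk2 w hmem
    rw [deg, Finset.card_eq_zero, Finset.eq_empty_iff_forall_notMem] at h0
    exact h0 (l.get k) (Finset.mem_filter.mpr ⟨Finset.mem_univ _, hadj.symm⟩)
  rw [hf0 (l.get k), hnbr] at hcond
  omega

end AuxLemmas

end BrushGame

/-- For every finite simple graph `G` with at least one edge,
`b(G) ≤ bg(G) ≤ 2·b(G) − 1` and `b(G) ≤ b̂g(G) ≤ 2·b(G)`. -/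
theorem brush_number_le_game_brush_number {V : Type*} [Fintype V] (G : SimpleGraph V)
    (hedge : ∃ u v : V, G.Adj u v) :
    BrushGame.bNum G ≤ BrushGame.bg G ∧
      (BrushGame.bg G : ℤ) ≤ 2 * (BrushGame.bNum G : ℤ) - 1 ∧
      BrushGame.bNum G ≤ BrushGame.bghat G ∧
      BrushGame.bghat G ≤ 2 * BrushGame.bNum G := by

  classical
  obtain ⟨f, hf, hb⟩ := BrushGame.bNum_rep (G := G)
  have hb1 : 1 ≤ BrushGame.bNum G := hb ▸ BrushGame.one_le_sum_of_cleansBy hedge hf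
  have hfuel : ∑ w, (BrushGame.deg G w - (fun _ => 0 : V → ℕ) w) < BrushGame.fuel G := by
    simpa [BrushGame.fuel] using Nat.lt_succ_self _
  have h1 := BrushGame.bNum_le_val (BrushGame.fuel G) (fun _ => 0) true hfuel
  have h2 := BrushGame.bNum_le_val (BrushGame.fuel G) (fun _ => 0) false hfuel
  have h3 := (BrushGame.val_le_phi hf (BrushGame.fuel G) (fun _ => 0)).1
  have h4 := (BrushGame.val_le_phi hf (BrushGame.fuel G) (fun _ => 0)).2
  simp only [Finset.sum_const_zero, Nat.sub_zero, zero_add] at h1 h2 h3 h4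
  have hbg : BrushGame.bg G = BrushGame.val G true (BrushGame.fuel G) (fun _ => 0) := rfl
  have hbh : BrushGame.bghat G = BrushGame.val G false (BrushGame.fuel G) (fun _ => 0) := rfl
  refine ⟨by omega, by omega, by omega, by omega⟩
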